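/- arXiv:1810.08754 — 4 statements merged into one kernel-verified Lean document; each statement's English description precedes it below -/
import Mathlib

section
/- Define operators H, G : ℓ²(ℤ) → ℓ²(ℤ) by (Hᵀ v)_k = ∑_i h_i v_{2k+i} and (Gᵀ v)_k = ∑_i g_i v_{2k+i}, where (h_i) is finitely supported with ∑ h_i² = 1, ∑ h_i h_{i+2m} = 0 for m ≠ 0, and g_i = (−1)^{1−i} h_{1−i}. Then Hᵀ H = I and Gᵀ G = I on ℓ²(ℤ). -/
open Function

lemma key_isometry (h : ℤ → ℝ) (hfin : (Function.support h).Finite)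
    (hnorm : ∑ᶠ i : ℤ, (h i) ^ 2 = 1)
    (horth : ∀ m : ℤ, m ≠ 0 → ∑ᶠ i : ℤ, h i * h (i + 2 * m) = 0)
    (w : ℤ → ℝ) (k : ℤ) :
    ∑' i : ℤ, h i * (∑' k' : ℤ, h (2 * k + i - 2 * k') * w k') = w k := by
  classical
  set s := hfin.toFinset with hs
  have hsupp : ∀ i : ℤ, i ∉ s → h i = 0 := by
    intro i hi
    by_contra hne
    exact hi (hfin.mem_toFinset.2 hne)
  -- each inner summand has finite support hence summable
  have hsumm : ∀ i : ℤ, Summable (fun k' : ℤ => h i * (h (2 * k + i - 2 * k') * w k')) := by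
    intro i
    apply summable_of_finite_support
    have : Function.support (fun k' : ℤ => h i * (h (2 * k + i - 2 * k') * w k'))
        ⊆ (fun k' : ℤ => 2 * k + i - 2 * k') ⁻¹' (Function.support h) := by
      intro k' hk'
      simp only [Function.mem_support, Set.mem_preimage] at *
      intro hz; apply hk'; rw [hz]; ring
    refine Set.Finite.subset ?_ this
    apply Set.Finite.preimage _ hfin
    intro a _ b _ hab
    simp only at hab; omega
  have step1 : ∑' i : ℤ, h i * (∑' k' : ℤ, h (2 * k + i - 2 * k') * w k')
      = ∑ i ∈ s, ∑' k' : ℤ, h i * (h (2 * k + i - 2 * k') * w k') := by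
    rw [tsum_eq_sum (s := s) (by intro i hi; rw [hsupp i hi]; ring)]
    exact Finset.sum_congr rfl fun i _ => by rw [← tsum_mul_left]
  rw [step1, ← Summable.tsum_finsetSum (fun i _ => hsumm i)]
  have step2 : ∀ k' : ℤ, (∑ i ∈ s, h i * (h (2 * k + i - 2 * k') * w k'))
      = (if k' = k then w k' else 0) := by
    intro k'
    have : (∑ i ∈ s, h i * (h (2 * k + i - 2 * k') * w k'))
        = (∑ i ∈ s, h i * h (i + 2 * (k - k'))) * w k' := by
      rw [Finset.sum_mul]
      refine Finset.sum_congr rfl fun i _ => ?_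
      have : 2 * k + i - 2 * k' = i + 2 * (k - k') := by ring
      rw [this]; ring
    rw [this]
    have hcoef : (∑ i ∈ s, h i * h (i + 2 * (k - k')))
        = ∑ᶠ i : ℤ, h i * h (i + 2 * (k - k')) := by
      refine (finsum_eq_sum_of_support_subset _ ?_).symm
      intro i hi
      simp only [Function.mem_support] at hi
      simp only [Finset.coe_sort_coe, Finset.mem_coe]
      by_contra hns
      rw [hsupp i hns, zero_mul] at hi
      exact hi rfl
    rw [hcoef]
    by_cases hk : k' = k
    · subst hk
      simp only [sub_self, mul_zero, add_zero, if_true]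
      have : ∑ᶠ i : ℤ, h i * h i = 1 := by
        rw [← hnorm]; exact finsum_congr fun i => (sq (h i)).symm
      rw [this, one_mul]
    · rw [horth (k - k') (by omega), zero_mul, if_neg hk]
  calc ∑' k' : ℤ, ∑ i ∈ s, h i * (h (2 * k + i - 2 * k') * w k')
      = ∑' k' : ℤ, (if k' = k then w k' else 0) := tsum_congr step2
    _ = w k := by
        rw [tsum_eq_single k (fun b hb => if_neg hb)]
        simp

theorem wavelet_analysis_operators_isometry
    (h g : ℤ → ℝ)
    (hfin : (Function.support h).Finite)
    (hnorm : ∑ᶠ i : ℤ, (h i) ^ 2 = 1)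
    (horth : ∀ m : ℤ, m ≠ 0 → ∑ᶠ i : ℤ, h i * h (i + 2 * m) = 0)
    (hg : ∀ i : ℤ, g i = (-1 : ℝ) ^ (1 - i) * h (1 - i)) :
    ∀ w : lp (fun _ : ℤ => ℝ) 2,
      (∀ k : ℤ,
        ∑' i : ℤ, h i * (∑' k' : ℤ, h (2 * k + i - 2 * k') * (w : ℤ → ℝ) k')
          = (w : ℤ → ℝ) k) ∧
      (∀ k : ℤ,
        ∑' i : ℤ, g i * (∑' k' : ℤ, g (2 * k + i - 2 * k') * (w : ℤ → ℝ) k')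
          = (w : ℤ → ℝ) k) := by
  -- sign squares to one
  have hsign : ∀ n : ℤ, ((-1 : ℝ) ^ n) * ((-1 : ℝ) ^ n) = 1 := by
    intro n
    rw [← zpow_add₀ (by norm_num : (-1 : ℝ) ≠ 0)]
    have : n + n = 2 * n := by ring
    rw [this, zpow_mul]
    norm_num
  have gfin : (Function.support g).Finite := by
    have : Function.support g ⊆ (fun i : ℤ => 1 - i) '' (Function.support h) := by
      intro i hi
      simp only [Function.mem_support, hg i] at hi
      refine ⟨1 - i, ?_, by ring⟩
      simp only [Function.mem_support]
      intro hz; apply hi; rw [hz]; ring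
    exact ((hfin.image _)).subset this
  have gnorm : ∑ᶠ i : ℤ, (g i) ^ 2 = 1 := by
    have : ∀ i : ℤ, (g i) ^ 2 = (fun j : ℤ => (h j) ^ 2) ((Equiv.subLeft (1 : ℤ)) i) := by
      intro i
      simp only [hg i, mul_pow, Equiv.subLeft_apply]
      rw [sq ((-1 : ℝ) ^ (1 - i)), hsign, one_mul]
    rw [finsum_congr this]
    exact Eq.trans (finsum_comp_equiv (Equiv.subLeft (1 : ℤ)) (f := fun j : ℤ => h j ^ 2)) hnorm
  have gorth : ∀ m : ℤ, m ≠ 0 → ∑ᶠ i : ℤ, g i * g (i + 2 * m) = 0 := by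
    intro m hm
    have : ∀ i : ℤ, g i * g (i + 2 * m)
        = (fun j : ℤ => h j * h (j + 2 * m)) ((Equiv.subLeft (1 - 2 * m)) i) := by
      intro i
      simp only [hg, Equiv.subLeft_apply]
      have h1 : (1 : ℤ) - (i + 2 * m) = 1 - 2 * m - i := by ring
      have h2 : (1 : ℤ) - 2 * m - i + 2 * m = 1 - i := by ring
      rw [h1, h2]
      have : (-1 : ℝ) ^ (1 - i) * h (1 - i) * ((-1 : ℝ) ^ (1 - 2 * m - i) * h (1 - 2 * m - i))
          = ((-1 : ℝ) ^ (1 - i) * (-1 : ℝ) ^ (1 - 2 * m - i)) * (h (1 - 2 * m - i) * h (1 - i)) := by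
        ring
      rw [this]
      have hse : (-1 : ℝ) ^ (1 - i) * (-1 : ℝ) ^ (1 - 2 * m - i) = 1 := by
        rw [← zpow_add₀ (by norm_num : (-1 : ℝ) ≠ 0)]
        have : (1 - i) + (1 - 2 * m - i) = 2 * (1 - m - i) := by ring
        rw [this, zpow_mul]; norm_num
      rw [hse, one_mul]
    rw [finsum_congr this]
    exact Eq.trans (finsum_comp_equiv (Equiv.subLeft (1 - 2 * m)) (f := fun j : ℤ => h j * h (j + 2 * m))) (horth m hm)
  intro w
  exact ⟨fun k => key_isometry h hfin hnorm horth _ k,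
         fun k => key_isometry g gfin gnorm gorth _ k⟩
end

section
/- Correctness of the full nonstandard-form multiplication: let W^{(ℓ)} be orthogonal matrices of size 2^{ℓ+1} × 2^{ℓ+1} for ℓ = L₀, …, L−1, and define recursively A^{(ℓ)} and D_j^{(ℓ)} (j=1,2,3) by [[D₁^{(ℓ)},D₂^{(ℓ)}],[D₃^{(ℓ)},A^{(ℓ)}]] = (W^{(ℓ)})ᵀ A^{(ℓ+1)} W^{(ℓ)}, starting from a given A^{(L)}. Given v^{(L)} ∈ ℝ^{2^L}, define (d^{(ℓ)}, v^{(ℓ)}) = (W^{(ℓ)})ᵀ v^{(ℓ+1)} for ℓ = L−1,…,L₀; set u^{(L₀)} = A^{(L₀)} v^{(L₀)}; and for ℓ = L₀,…,L−1 set u^{(ℓ+1)} = W^{(ℓ)} ( D₁^{(ℓ)} d^{(ℓ)} + D₂^{(ℓ)} v^{(ℓ)}, D₃^{(ℓ)} d^{(ℓ)} + u^{(ℓ)} ). Then u^{(L)} = A^{(L)} v^{(L)}. -/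
open Matrix

/-- Identification of `ℝ^{2^ℓ} × ℝ^{2^ℓ}` index pairs with `ℝ^{2^{ℓ+1}}` indices. -/
def blockEquiv (ℓ : ℕ) : Fin (2 ^ ℓ) ⊕ Fin (2 ^ ℓ) ≃ Fin (2 ^ (ℓ + 1)) :=
  finSumFinEquiv.trans (finCongr (by rw [pow_succ, mul_two]))

theorem nonstandard_form_matvec_correct
    (L₀ L : ℕ) (hL : L₀ ≤ L)
    (W : ∀ ℓ : ℕ, Matrix (Fin (2 ^ (ℓ + 1))) (Fin (2 ^ (ℓ + 1))) ℝ)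
    (hW : ∀ ℓ : ℕ, L₀ ≤ ℓ → ℓ < L → (W ℓ)ᵀ * W ℓ = 1 ∧ W ℓ * (W ℓ)ᵀ = 1)
    (A D₁ D₂ D₃ : ∀ ℓ : ℕ, Matrix (Fin (2 ^ ℓ)) (Fin (2 ^ ℓ)) ℝ)
    (hdec : ∀ ℓ : ℕ, L₀ ≤ ℓ → ℓ < L →
      Matrix.fromBlocks (D₁ ℓ) (D₂ ℓ) (D₃ ℓ) (A ℓ) =
        ((W ℓ)ᵀ * A (ℓ + 1) * W ℓ).submatrix (blockEquiv ℓ) (blockEquiv ℓ))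
    (v d : ∀ ℓ : ℕ, Fin (2 ^ ℓ) → ℝ)
    (hv : ∀ ℓ : ℕ, L₀ ≤ ℓ → ℓ < L →
      Sum.elim (d ℓ) (v ℓ) = fun x => ((W ℓ)ᵀ.mulVec (v (ℓ + 1))) (blockEquiv ℓ x))
    (u : ∀ ℓ : ℕ, Fin (2 ^ ℓ) → ℝ)
    (hu0 : u L₀ = (A L₀).mulVec (v L₀))
    (hur : ∀ ℓ : ℕ, L₀ ≤ ℓ → ℓ < L →
      u (ℓ + 1) = (W ℓ).mulVec (fun j =>
        Sum.elim ((D₁ ℓ).mulVec (d ℓ) + (D₂ ℓ).mulVec (v ℓ))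
          ((D₃ ℓ).mulVec (d ℓ) + u ℓ) ((blockEquiv ℓ).symm j))) :
    u L = (A L).mulVec (v L) := by
  suffices h : ∀ ℓ, L₀ ≤ ℓ → ℓ ≤ L → u ℓ = (A ℓ).mulVec (v ℓ) from h L hL le_rfl
  intro ℓ hℓ
  induction ℓ, hℓ using Nat.le_induction with
  | base => intro _; exact hu0
  | succ n hn ih =>
    intro hnL
    have hlt : n < L := hnL
    have ihn := ih hlt.le
    obtain ⟨h1, h2⟩ := hW n hn hlt
    have hd := hdec n hn hlt
    have hvn := hv n hn hlt
    set e := blockEquiv n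
    set B := (W n)ᵀ * A (n + 1) * W n with hB
    set w := (W n)ᵀ.mulVec (v (n + 1)) with hw
    have key : (fun j => Sum.elim ((D₁ n).mulVec (d n) + (D₂ n).mulVec (v n))
        ((D₃ n).mulVec (d n) + u n) (e.symm j)) = B.mulVec w := by
      have hmv : (Matrix.fromBlocks (D₁ n) (D₂ n) (D₃ n) (A n)).mulVec
          (Sum.elim (d n) (v n)) = (B.mulVec w) ∘ e := by
        rw [hd, hvn, Matrix.submatrix_mulVec_equiv]
        have hww : ((fun x => w (e x)) ∘ ⇑e.symm) = w := by
          funext j; simp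
        rw [hww]
      rw [Matrix.fromBlocks_mulVec] at hmv
      simp only [Sum.elim_comp_inl, Sum.elim_comp_inr] at hmv
      funext j
      have := congrFun hmv (e.symm j)
      simp only [Function.comp_apply, Equiv.apply_symm_apply] at this
      rw [← this, ihn]
    rw [hur n hn hlt, key, hw, hB, Matrix.mulVec_mulVec, Matrix.mulVec_mulVec]
    have h3 : W n * ((W n)ᵀ * A (n + 1) * W n) * (W n)ᵀ = A (n + 1) := by
      simp only [← Matrix.mul_assoc]
      rw [h2, Matrix.one_mul, Matrix.mul_assoc, h2, Matrix.mul_one]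
    rw [h3]
end

section
/- Prove the telescoping identity underlying the algorithm: with the notation above, for every ℓ with L₀ ≤ ℓ ≤ L, the vector u^{(ℓ)} produced by the algorithm equals A^{(ℓ)} v^{(ℓ)}. -/
open Matrix

theorem nonstandard_form_matvec_invariant
    (L₀ L : ℕ) (hL : L₀ ≤ L)
    (W : ∀ ℓ : ℕ, Matrix (Fin (2 ^ (ℓ + 1))) (Fin (2 ^ (ℓ + 1))) ℝ)
    (hW : ∀ ℓ : ℕ, L₀ ≤ ℓ → ℓ < L → (W ℓ)ᵀ * W ℓ = 1 ∧ W ℓ * (W ℓ)ᵀ = 1)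
    (A D₁ D₂ D₃ : ∀ ℓ : ℕ, Matrix (Fin (2 ^ ℓ)) (Fin (2 ^ ℓ)) ℝ)
    (hdec : ∀ ℓ : ℕ, L₀ ≤ ℓ → ℓ < L →
      Matrix.fromBlocks (D₁ ℓ) (D₂ ℓ) (D₃ ℓ) (A ℓ) =
        ((W ℓ)ᵀ * A (ℓ + 1) * W ℓ).submatrix (blockEquiv ℓ) (blockEquiv ℓ))
    (v d : ∀ ℓ : ℕ, Fin (2 ^ ℓ) → ℝ)
    (hv : ∀ ℓ : ℕ, L₀ ≤ ℓ → ℓ < L →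
      Sum.elim (d ℓ) (v ℓ) = fun x => ((W ℓ)ᵀ.mulVec (v (ℓ + 1))) (blockEquiv ℓ x))
    (u : ∀ ℓ : ℕ, Fin (2 ^ ℓ) → ℝ)
    (hu0 : u L₀ = (A L₀).mulVec (v L₀))
    (hur : ∀ ℓ : ℕ, L₀ ≤ ℓ → ℓ < L →
      u (ℓ + 1) = (W ℓ).mulVec (fun j =>
        Sum.elim ((D₁ ℓ).mulVec (d ℓ) + (D₂ ℓ).mulVec (v ℓ))
          ((D₃ ℓ).mulVec (d ℓ) + u ℓ) ((blockEquiv ℓ).symm j))) :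
    ∀ ℓ : ℕ, L₀ ≤ ℓ → ℓ ≤ L → u ℓ = (A ℓ).mulVec (v ℓ) := by
  have key : ∀ n : ℕ, L₀ ≤ n → n < L → u n = (A n).mulVec (v n) →
      u (n + 1) = (A (n + 1)).mulVec (v (n + 1)) := by
    intro n h1 h2 ih
    set e := blockEquiv n with he
    set B := (W n)ᵀ * A (n + 1) * W n with hB
    obtain ⟨hWo, hWo'⟩ := hW n h1 h2
    -- the inner vector equals B *ᵥ (Wᵀ *ᵥ v (n+1))
    have hinner : (fun j => Sum.elim ((D₁ n).mulVec (d n) + (D₂ n).mulVec (v n))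
        ((D₃ n).mulVec (d n) + u n) (e.symm j)) =
        B.mulVec ((W n)ᵀ.mulVec (v (n + 1))) := by
      have h4 : Sum.elim ((D₁ n).mulVec (d n) + (D₂ n).mulVec (v n))
          ((D₃ n).mulVec (d n) + u n) =
          (Matrix.fromBlocks (D₁ n) (D₂ n) (D₃ n) (A n)).mulVec (Sum.elim (d n) (v n)) := by
        rw [ih, Matrix.fromBlocks_mulVec]
        simp
      have h5 : (Matrix.fromBlocks (D₁ n) (D₂ n) (D₃ n) (A n)).mulVec (Sum.elim (d n) (v n)) =
          (B.mulVec ((W n)ᵀ.mulVec (v (n + 1)))) ∘ e := by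
        rw [hdec n h1 h2, hv n h1 h2, Matrix.submatrix_mulVec_equiv]
        have hc : ((fun x => ((W n)ᵀ.mulVec (v (n + 1))) (e x)) ∘ e.symm)
            = (W n)ᵀ.mulVec (v (n + 1)) := by
          funext x; simp
        rw [hc]
      funext j
      have := congrFun h4 (e.symm j)
      rw [this, congrFun h5 (e.symm j)]
      simp
    rw [hur n h1 h2, hinner, hB]
    rw [Matrix.mulVec_mulVec, Matrix.mulVec_mulVec]
    have hM : W n * ((W n)ᵀ * A (n + 1) * W n) * (W n)ᵀ = A (n + 1) := by
      calc W n * ((W n)ᵀ * A (n + 1) * W n) * (W n)ᵀ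
          = (W n * (W n)ᵀ) * A (n + 1) * (W n * (W n)ᵀ) := by
            simp only [Matrix.mul_assoc]
        _ = A (n + 1) := by rw [hWo']; simp
    rw [hM]
  intro ℓ
  induction ℓ with
  | zero => intro h1 _; have : L₀ = 0 := Nat.le_zero.mp h1; subst this; exact hu0
  | succ n ih =>
    intro h1 h2
    rcases Nat.lt_or_ge L₀ (n + 1) with h | h
    · have hn : L₀ ≤ n := Nat.lt_succ_iff.mp h
      exact key n hn h2 (ih hn (Nat.le_of_succ_le h2))
    · have : L₀ = n + 1 := Nat.le_antisymm h1 h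
      subst this; exact hu0
end

section
/- Let A and A* have kernels a(x,y) and a(y,x). Suppose the wavelet ψ is supported in an interval of length 2p−1, has p vanishing moments, and the kernel a satisfies |∂_x^p a(x,y)| + |∂_y^p a(x,y)| ≤ C_p |x−y|^{−1−p} for x ≠ y. Then for |k₁ − k₂| ≥ 2p, the nonstandard-form coefficient D^{(ℓ)}_{1,k₁,k₂} = ∬ ψ^{(ℓ)}_{k₁}(x) a(x,y) ψ^{(ℓ)}_{k₂}(y) dx dy satisfies |D^{(ℓ)}_{1,k₁,k₂}| ≤ C'_p / (1 + |k₁−k₂|^{p+1}) for a constant C'_p depending only on p, C_p, and ψ. -/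
open MeasureTheory

lemma iterDW_eq (f : ℝ → ℝ) {U : Set ℝ} (hU : IsOpen U) (n : ℕ)
    (hf : ContDiffOn ℝ n f U) {s : Set ℝ} (hs : UniqueDiffOn ℝ s) (hsU : s ⊆ U)
    {x : ℝ} (hx : x ∈ s) : iteratedDerivWithin n f s x = iteratedDeriv n f x := by
  have h1 : HasFTaylorSeriesUpToOn (n : ℕ∞) f (ftaylorSeriesWithin ℝ f U) U :=
    hf.ftaylorSeriesWithin hU.uniqueDiffOn
  have h2 := (h1.mono hsU).eq_iteratedFDerivWithin_of_uniqueDiffOn le_rfl hs hx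
  have h3 : iteratedFDerivWithin ℝ n f U x = iteratedFDeriv ℝ n f x :=
    iteratedFDerivWithin_of_isOpen n hU (hsU hx)
  rw [iteratedDerivWithin_eq_iteratedFDerivWithin, iteratedDeriv_eq_iteratedFDeriv, ← h2, ← h3]
  rfl

set_option maxHeartbeats 2000000 in
theorem nonstandard_coefficients_decay
    (p : ℕ) (hp : 0 < p) (ψ : ℝ → ℝ)
    (hψint : Integrable ψ)
    (hψsupp : tsupport ψ ⊆ Set.Icc (0 : ℝ) (2 * (p : ℝ) - 1))
    (hmom : ∀ j : ℕ, j < p → (∫ x : ℝ, x ^ j * ψ x) = 0)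
    (Cp : ℝ) (a : ℝ → ℝ → ℝ)
    (hsm₁ : ∀ y : ℝ, ContDiffOn ℝ p (fun x => a x y) {x : ℝ | x ≠ y})
    (hsm₂ : ∀ x : ℝ, ContDiffOn ℝ p (fun y => a x y) {y : ℝ | y ≠ x})
    (hker : ∀ x y : ℝ, x ≠ y →
      |iteratedDeriv p (fun t => a t y) x| + |iteratedDeriv p (fun t => a x t) y| ≤
        Cp / |x - y| ^ (1 + p)) :
    ∃ C' : ℝ, ∀ (ℓ : ℕ) (k₁ k₂ : ℤ), 2 * (p : ℤ) ≤ |k₁ - k₂| →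
      |∫ x : ℝ, ∫ y : ℝ,
          ((2 : ℝ) ^ ((ℓ : ℝ) / 2) * ψ ((2 : ℝ) ^ ℓ * x - k₁)) * a x y *
            ((2 : ℝ) ^ ((ℓ : ℝ) / 2) * ψ ((2 : ℝ) ^ ℓ * y - k₂))| ≤
        C' / (1 + (|k₁ - k₂| : ℝ) ^ (p + 1)) := by
  obtain ⟨q, rfl⟩ : ∃ q, p = q + 1 := ⟨p - 1, by omega⟩
  -- basic constants
  have Cp0 : 0 ≤ Cp := by
    have h := hker 0 1 (by norm_num)
    have h0 : |(0:ℝ) - 1| ^ (1 + (q+1)) = 1 := by norm_num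
    rw [h0, div_one] at h
    exact le_trans (by positivity) h
  set pr : ℝ := ((q + 1 : ℕ) : ℝ) with hprdef
  have hpr1 : 1 ≤ pr := by simp [hprdef]
  set r : ℝ := 2 * pr - 1 with hrdef
  have hr1 : 1 ≤ r := by simp [hrdef]; linarith
  set I : ℝ := ∫ t : ℝ, |ψ t| with hIdef
  have hI0 : 0 ≤ I := integral_nonneg fun t => abs_nonneg _
  set X : ℝ := Cp * (2 * pr) ^ (1 + (q + 1)) * r ^ (q + 1) * I ^ 2 / (q.factorial : ℝ) with hXdef
  have h2pr : (0:ℝ) ≤ 2 * pr := by linarith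
  have hX0 : 0 ≤ X := by
    rw [hXdef]
    exact div_nonneg (mul_nonneg (mul_nonneg (mul_nonneg Cp0 (pow_nonneg h2pr _))
      (pow_nonneg (by linarith) _)) (sq_nonneg I)) (Nat.cast_nonneg _)
  refine ⟨2 * X, ?_⟩
  intro ℓ k₁ k₂ hk
  set c : ℝ := (2 : ℝ) ^ ℓ with hcdef
  have hc : 0 < c := by positivity
  have hcne : c ≠ 0 := ne_of_gt hc
  set B : ℝ := (2 : ℝ) ^ ((ℓ : ℝ) / 2) with hBdef
  have hB : 0 < B := Real.rpow_pos_of_pos two_pos _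
  have hBB : B * B = c := by
    rw [hBdef, ← Real.rpow_add two_pos]
    have : (ℓ : ℝ) / 2 + (ℓ : ℝ) / 2 = (ℓ : ℝ) := by ring
    rw [this, hcdef, Real.rpow_natCast]
  set K1 : ℝ := (k₁ : ℝ) with hK1def
  set K2 : ℝ := (k₂ : ℝ) with hK2def
  set d : ℝ := |K1 - K2| with hddef
  have hd : 2 * pr ≤ d := by
    have h : ((2 * ((q:ℤ)+1) : ℤ) : ℝ) ≤ ((|k₁ - k₂| : ℤ) : ℝ) := Int.cast_le.mpr (by exact_mod_cast hk)
    push_cast at h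
    simpa [hddef, hK1def, hK2def, hprdef] using h
  have hd0 : 0 < d := by linarith
  set y0 : ℝ := K2 / c with hy0def
  set y1 : ℝ := (K2 + r) / c with hy1def
  have hy01 : y0 < y1 := by
    rw [hy0def, hy1def, div_lt_div_iff_of_pos_right hc]
    linarith
  have hy1y0 : y1 - y0 = r / c := by rw [hy0def, hy1def]; ring
  -- support facts
  have hsupp₂ : ∀ y : ℝ, ψ (c * y - K2) ≠ 0 → y ∈ Set.Icc y0 y1 := by
    intro y hy
    have h1 : c * y - K2 ∈ Set.Icc (0:ℝ) r := by
      have := hψsupp (subset_tsupport ψ (Function.mem_support.mpr hy))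
      simpa [hrdef, hprdef] using this
    obtain ⟨h2, h3⟩ := h1
    constructor
    · rw [hy0def, div_le_iff₀ hc]; nlinarith [mul_comm c y]
    · rw [hy1def, le_div_iff₀ hc]; nlinarith [mul_comm c y]
  have hsupp₁ : ∀ x : ℝ, ψ (c * x - K1) ≠ 0 → c * x - K1 ∈ Set.Icc (0:ℝ) r := by
    intro x hx
    have := hψsupp (subset_tsupport ψ (Function.mem_support.mpr hx))
    simpa [hrdef, hprdef] using this
  -- integrability of scaled wavelets
  have hΦ₂int : Integrable (fun y => ψ (c * y - K2)) := by
    have h1 : Integrable (fun t => ψ (t - K2)) := hψint.comp_sub_right K2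
    exact h1.comp_mul_left' hcne
  have hΦ₁int : Integrable (fun x => ψ (c * x - K1)) := by
    have h1 : Integrable (fun t => ψ (t - K1)) := hψint.comp_sub_right K1
    exact h1.comp_mul_left' hcne
  -- integral of |scaled wavelet|
  have habs : ∀ K : ℝ, (∫ y : ℝ, |ψ (c * y - K)|) = c⁻¹ * I := by
    intro K
    have h1 := Measure.integral_comp_mul_left (fun t => |ψ (t - K)|) c
    rw [h1, integral_sub_right_eq_self (fun t => |ψ t|) K, smul_eq_mul,
      abs_of_nonneg (inv_nonneg.mpr hc.le), hIdef]
  -- vanishing moments of the scaled wavelet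
  have Lmom : ∀ j : ℕ, j < q + 1 → (∫ y : ℝ, (y - y0) ^ j * ψ (c * y - K2)) = 0 := by
    intro j hj
    have key : ∀ y : ℝ, (y - y0) ^ j * ψ (c * y - K2)
        = (fun t => ((t - K2) / c) ^ j * ψ (t - K2)) (c * y) := by
      intro y
      have : (c * y - K2) / c = y - y0 := by rw [hy0def]; field_simp
      simp only [this]
    rw [integral_congr_ae (Filter.Eventually.of_forall key),
      Measure.integral_comp_mul_left (fun t => ((t - K2) / c) ^ j * ψ (t - K2)) c,
      integral_sub_right_eq_self (fun t => (t / c) ^ j * ψ t) K2]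
    have h2 : ∀ t : ℝ, (t / c) ^ j * ψ t = (c ^ j)⁻¹ * (t ^ j * ψ t) := by
      intro t; rw [div_pow]; ring
    rw [integral_congr_ae (Filter.Eventually.of_forall h2), integral_const_mul,
      hmom j (by omega), mul_zero, smul_zero]
  -- integrability of moments against scaled wavelet
  have Mintg : ∀ j : ℕ, Integrable (fun y => (y - y0) ^ j * ψ (c * y - K2)) := by
    intro j
    have haesm : AEStronglyMeasurable (fun y : ℝ => (y - y0) ^ j * ψ (c * y - K2)) volume :=
      (((continuous_id.sub continuous_const).pow j).aestronglyMeasurable).mul hΦ₂int.1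
    refine Integrable.mono' ((hΦ₂int.abs).const_mul ((r / c) ^ j)) haesm
      (Filter.Eventually.of_forall fun y => ?_)
    by_cases h : ψ (c * y - K2) = 0
    · simp [h]
    · obtain ⟨h1, h2⟩ := hsupp₂ y h
      rw [Real.norm_eq_abs, abs_mul]
      apply mul_le_mul_of_nonneg_right _ (abs_nonneg _)
      rw [abs_pow]
      apply pow_le_pow_left₀ (abs_nonneg _)
      rw [abs_of_nonneg (by linarith)]
      linarith [hy1y0]
  -- the key constants
  set Cb : ℝ := Cp / (d / (2 * pr * c)) ^ (1 + (q + 1)) with hCbdef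
  have h2prc : (0:ℝ) < 2 * pr * c := mul_pos (by linarith) hc
  have hδ : 0 < d / (2 * pr * c) := div_pos hd0 h2prc
  have hCb0 : 0 ≤ Cb := div_nonneg Cp0 (pow_nonneg hδ.le _)
  set R : ℝ := Cb * (r / c) ^ (q + 1) / (q.factorial : ℝ) with hRdef
  have hrc0 : (0:ℝ) ≤ r / c := div_nonneg (by linarith) hc.le
  have hR0 : 0 ≤ R :=
    div_nonneg (mul_nonneg hCb0 (pow_nonneg hrc0 _)) (Nat.cast_nonneg _)
  -- main inner estimate
  have main : ∀ x : ℝ, c * x - K1 ∈ Set.Icc (0:ℝ) r →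
      |∫ y : ℝ, a x y * ψ (c * y - K2)| ≤ R * (c⁻¹ * I) := by
    intro x hx
    have hfar : ∀ ξ ∈ Set.Icc y0 y1, d / (2 * pr * c) ≤ |x - ξ| := by
      intro ξ hξ
      obtain ⟨h1, h2⟩ := hξ
      rw [hy0def] at h1
      rw [hy1def] at h2
      have e1 : K2 ≤ ξ * c := (div_le_iff₀ hc).mp h1
      have e2 : ξ * c ≤ K2 + r := (le_div_iff₀ hc).mp h2
      have hcc : ξ * c = c * ξ := mul_comm _ _
      obtain ⟨hu1, hu2⟩ := hx
      have t1 : |K1 - K2| ≤ |c*x - c*ξ| + |(c*x - K1) - (c*ξ - K2)| := by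
        have e : K1 - K2 = (c*x - c*ξ) - ((c*x - K1) - (c*ξ - K2)) := by ring
        rw [e]; exact abs_sub _ _
      have t2 : |(c*x - K1) - (c*ξ - K2)| ≤ r :=
        abs_le.mpr ⟨by linarith, by linarith⟩
      have t3 : |c*x - c*ξ| = c * |x - ξ| := by
        rw [show c*x - c*ξ = c*(x-ξ) by ring, abs_mul, abs_of_pos hc]
      have t4 : d - r ≤ c * |x - ξ| := by rw [hddef]; linarith
      rw [div_le_iff₀ h2prc]
      nlinarith [mul_le_mul_of_nonneg_left t4 (show (0:ℝ) ≤ 2*pr by linarith),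
        mul_nonneg (show (0:ℝ) ≤ r by linarith) (show (0:ℝ) ≤ d - 2*pr by linarith)]
    have hne : ∀ ξ ∈ Set.Icc y0 y1, ξ ≠ x := by
      intro ξ hξ he
      have h1 := hfar ξ hξ
      rw [he, sub_self, abs_zero] at h1
      linarith
    have hSsub : Set.Icc y0 y1 ⊆ {t : ℝ | t ≠ x} := fun ξ hξ => hne ξ hξ
    have hUD : UniqueDiffOn ℝ (Set.Icc y0 y1) := uniqueDiffOn_Icc hy01
    have hDb : ∀ ξ ∈ Set.Icc y0 y1,
        ‖iteratedDerivWithin (q+1) (fun t => a x t) (Set.Icc y0 y1) ξ‖ ≤ Cb := by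
      intro ξ hξ
      rw [Real.norm_eq_abs, iterDW_eq (fun t => a x t) isOpen_ne (q+1) (hsm₂ x) hUD hSsub hξ]
      have h1 := hker x ξ (Ne.symm (hne ξ hξ))
      have h2 : |iteratedDeriv (q+1) (fun t => a x t) ξ| ≤ Cp / |x - ξ| ^ (1+(q+1)) :=
        le_trans (le_add_of_nonneg_left (abs_nonneg _)) h1
      refine h2.trans ?_
      rw [hCbdef]
      exact div_le_div_of_nonneg_left Cp0 (pow_pos hδ _)
        (pow_le_pow_left₀ hδ.le (hfar ξ hξ) _)
    have hcdS : ContDiffOn ℝ ((q:ℕ∞) + 1) (fun t => a x t) (Set.Icc y0 y1) := by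
      have h := (hsm₂ x).mono hSsub
      exact_mod_cast h
    have htay : ∀ y ∈ Set.Icc y0 y1,
        |a x y - taylorWithinEval (fun t => a x t) q (Set.Icc y0 y1) y0 y| ≤
          Cb * (y - y0)^(q+1) / (q.factorial : ℝ) := by
      intro y hy
      have h := taylor_mean_remainder_bound hy01.le hcdS hy hDb
      rwa [Real.norm_eq_abs] at h
    set T : ℝ → ℝ := fun y => taylorWithinEval (fun t => a x t) q (Set.Icc y0 y1) y0 y with hTdef
    set D : ℕ → ℝ := fun j => iteratedDerivWithin j (fun t => a x t) (Set.Icc y0 y1) y0 with hDdef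
    have hTsum : ∀ y : ℝ, T y = ∑ j ∈ Finset.range (q+1),
        ((j.factorial : ℝ)⁻¹ * (y - y0)^j) * D j := by
      intro y
      simp only [hTdef]
      rw [taylor_within_apply]
      exact Finset.sum_congr rfl fun j _ => by simp only [hDdef, smul_eq_mul]
    have eTs : ∀ y : ℝ, T y * ψ (c*y - K2) = ∑ j ∈ Finset.range (q+1),
        ((j.factorial : ℝ)⁻¹ * D j) * ((y - y0)^j * ψ (c*y - K2)) := by
      intro y
      rw [hTsum y, Finset.sum_mul]
      exact Finset.sum_congr rfl fun j _ => by ring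
    have hTzero : (∫ y : ℝ, T y * ψ (c*y - K2)) = 0 := by
      rw [integral_congr_ae (Filter.Eventually.of_forall eTs),
        integral_finset_sum _ (fun j _ => (Mintg j).const_mul _)]
      refine Finset.sum_eq_zero fun j hj => ?_
      rw [integral_const_mul, Lmom j (Finset.mem_range.mp hj), mul_zero]
    have hTcont : Continuous T := by
      rw [show T = fun y => ∑ j ∈ Finset.range (q+1),
          ((j.factorial : ℝ)⁻¹ * (y - y0)^j) * D j from funext hTsum]
      exact continuous_finset_sum _ fun j _ =>
        (continuous_const.mul ((continuous_id.sub continuous_const).pow j)).mul continuous_const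
    have haesm : AEStronglyMeasurable (fun y => a x y) volume := by
      have h1 : ContinuousOn (fun y => a x y) {y : ℝ | y ≠ x} := (hsm₂ x).continuousOn
      have h2 := h1.aestronglyMeasurable (μ := volume) isOpen_ne.measurableSet
      have h3 : volume.restrict {y : ℝ | y ≠ x} = volume := by
        have hc1 : {y : ℝ | y ≠ x} =ᵐ[(volume : Measure ℝ)] Set.univ := by
          apply ae_eq_univ.mpr
          rw [show {y : ℝ | y ≠ x}ᶜ = {x} by ext t; simp]
          exact measure_singleton x
        rw [Measure.restrict_congr_set hc1, Measure.restrict_univ]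
      rwa [h3] at h2
    have hbound : ∀ y : ℝ, ‖(a x y - T y) * ψ (c*y - K2)‖ ≤ R * |ψ (c*y - K2)| := by
      intro y
      by_cases h : ψ (c*y - K2) = 0
      · simp [h]
      · obtain ⟨h1y, h2y⟩ := hsupp₂ y h
        rw [Real.norm_eq_abs, abs_mul]
        apply mul_le_mul_of_nonneg_right _ (abs_nonneg _)
        refine (htay y ⟨h1y, h2y⟩).trans ?_
        rw [hRdef]
        have h2 : (y - y0)^(q+1) ≤ (r/c)^(q+1) :=
          pow_le_pow_left₀ (by linarith) (by linarith [hy1y0]) _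
        exact (div_le_div_iff_of_pos_right (by exact_mod_cast q.factorial_pos)).mpr
          (mul_le_mul_of_nonneg_left h2 hCb0)
    have haesm2 : AEStronglyMeasurable (fun y => (a x y - T y) * ψ (c*y - K2)) volume :=
      (haesm.sub hTcont.aestronglyMeasurable).mul hΦ₂int.1
    have Iab : Integrable (fun y => (a x y - T y) * ψ (c*y - K2)) :=
      Integrable.mono' ((hΦ₂int.abs).const_mul R) haesm2 (Filter.Eventually.of_forall hbound)
    have IT : Integrable (fun y => T y * ψ (c*y - K2)) := by
      rw [show (fun y => T y * ψ (c*y - K2)) = fun y => ∑ j ∈ Finset.range (q+1),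
          ((j.factorial : ℝ)⁻¹ * D j) * ((y - y0)^j * ψ (c*y - K2)) from funext eTs]
      exact integrable_finset_sum _ fun j _ => (Mintg j).const_mul _
    have Iaψ : Integrable (fun y => a x y * ψ (c*y - K2)) := by
      rw [show (fun y => a x y * ψ (c*y - K2)) =
          fun y => (a x y - T y) * ψ (c*y - K2) + T y * ψ (c*y - K2) from funext fun y => by ring]
      exact Iab.add IT
    have hsplit : (∫ y : ℝ, a x y * ψ (c*y - K2)) = ∫ y : ℝ, (a x y - T y) * ψ (c*y - K2) :=
      calc (∫ y : ℝ, a x y * ψ (c*y-K2))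
          = (∫ y : ℝ, a x y * ψ (c*y-K2)) - (∫ y : ℝ, T y * ψ (c*y-K2)) := by
            rw [hTzero, sub_zero]
        _ = ∫ y : ℝ, (a x y * ψ (c*y-K2) - T y * ψ (c*y-K2)) := (integral_sub Iaψ IT).symm
        _ = ∫ y : ℝ, (a x y - T y) * ψ (c*y-K2) :=
            integral_congr_ae (Filter.Eventually.of_forall fun y => by ring_nf)
    rw [hsplit]
    have hn := norm_integral_le_of_norm_le ((hΦ₂int.abs).const_mul R)
      (Filter.Eventually.of_forall hbound)
    calc |∫ y : ℝ, (a x y - T y) * ψ (c*y - K2)|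
        = ‖∫ y : ℝ, (a x y - T y) * ψ (c*y - K2)‖ := (Real.norm_eq_abs _).symm
      _ ≤ ∫ y : ℝ, R * |ψ (c*y - K2)| := hn
      _ = R * (c⁻¹ * I) := by rw [integral_const_mul, habs K2]
  -- rewrite the inner integral
  have hrew : ∀ x : ℝ, (∫ y : ℝ, (B * ψ (c*x - K1)) * a x y * (B * ψ (c*y - K2)))
      = (c * ψ (c*x - K1)) * ∫ y : ℝ, a x y * ψ (c*y - K2) := by
    intro x
    calc (∫ y : ℝ, (B * ψ (c*x - K1)) * a x y * (B * ψ (c*y - K2)))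
        = ∫ y : ℝ, (B * B * ψ (c*x - K1)) * (a x y * ψ (c*y - K2)) :=
          integral_congr_ae (Filter.Eventually.of_forall fun y => by ring)
      _ = (B * B * ψ (c*x - K1)) * ∫ y : ℝ, a x y * ψ (c*y - K2) := integral_const_mul _ _
      _ = _ := by rw [hBB]
  -- bound the outer integrand
  have hgbound : ∀ x : ℝ,
      ‖∫ y : ℝ, (B * ψ (c*x - K1)) * a x y * (B * ψ (c*y - K2))‖
        ≤ (c * (R * (c⁻¹ * I))) * |ψ (c*x - K1)| := by
    intro x
    rw [hrew x, Real.norm_eq_abs, abs_mul, abs_mul, abs_of_pos hc]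
    by_cases h : ψ (c*x - K1) = 0
    · simp [h]
    · have hb := main x (hsupp₁ x h)
      calc c * |ψ (c*x-K1)| * |∫ y : ℝ, a x y * ψ (c*y - K2)|
          ≤ c * |ψ (c*x-K1)| * (R * (c⁻¹ * I)) :=
            mul_le_mul_of_nonneg_left hb (by positivity)
        _ = (c * (R * (c⁻¹ * I))) * |ψ (c*x-K1)| := by ring
  have hfinal := norm_integral_le_of_norm_le ((hΦ₁int.abs).const_mul (c * (R * (c⁻¹ * I))))
    (Filter.Eventually.of_forall hgbound)
  have hdn1 : (1:ℝ) ≤ d ^ (q+1+1) := one_le_pow₀ (by linarith)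
  have hdnpos : (0:ℝ) < d ^ (q+1+1) := pow_pos hd0 _
  have hval : c * (R * (c⁻¹ * I)) * (c⁻¹ * I) = X / d ^ (q+1+1) := by
    rw [hRdef, hCbdef, hXdef]
    rw [show 1 + (q+1) = q+1+1 from by ring]
    rw [div_pow, div_pow]
    field_simp
    ring
  calc |∫ (x : ℝ) (y : ℝ), (B * ψ (c*x - K1)) * a x y * (B * ψ (c*y - K2))|
      = ‖∫ (x : ℝ) (y : ℝ), (B * ψ (c*x - K1)) * a x y * (B * ψ (c*y - K2))‖ :=
        (Real.norm_eq_abs _).symm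
    _ ≤ ∫ x : ℝ, (c * (R * (c⁻¹ * I))) * |ψ (c*x - K1)| := hfinal
    _ = (c * (R * (c⁻¹ * I))) * (c⁻¹ * I) := by rw [integral_const_mul, habs K1]
    _ = X / d ^ (q+1+1) := hval
    _ ≤ 2 * X / (1 + d ^ (q+1+1)) := by
        rw [div_le_div_iff₀ hdnpos (add_pos_of_pos_of_nonneg one_pos (pow_nonneg hd0.le _))]
        nlinarith [mul_nonneg hX0 (by linarith : (0:ℝ) ≤ d ^ (q+1+1) - 1)]
end
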